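/- arXiv:1805.01327 — 3 statements merged into one kernel-verified Lean document; each statement's English description precedes it below -/
import Mathlib

section
/- With the pyramid setup, define c_{i,j}^{(r)} = Σ e_{h,k}, summed over pairs (h,k) with row(h) = i, row(k) = j, and col(k) - col(h) + 1 = r. Then the bracket satisfies [c_{i,j}^{(r)}, c_{k,l}^{(s)}] = δ_{j,k} c_{i,l}^{(r+s-1)} - δ_{i,l} c_{k,j}^{(r+s-1)}. -/
/-- Boxes of a pyramid with `n` rows, row `i` having `p i` boxes. -/
abbrev PyrBox (n : ℕ) (p : Fin n → ℕ) : Type := Σ i : Fin n, Fin (p i)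

/-- The column of a box: `o i` is the column of the leftmost box of row `i`. -/
def pyrCol {n : ℕ} {p : Fin n → ℕ} (o : Fin n → ℕ) (b : PyrBox n p) : ℕ :=
  o b.1 + b.2.val

/-- The element `c_{i,j}^{(r)} = Σ e_{h,k}` summed over boxes `h, k` with
`row h = i`, `row k = j` and `col k - col h + 1 = r`. -/
def cPyr (k : Type*) [Field k] {n : ℕ} (p o : Fin n → ℕ) (i j : Fin n) (r : ℕ) :
    Matrix (PyrBox n p) (PyrBox n p) k :=
  ∑ h : PyrBox n p, ∑ m : PyrBox n p,
    if h.1 = i ∧ m.1 = j ∧ pyrCol o m + 1 = pyrCol o h + r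
      then Matrix.single h m 1 else 0

/-- The entry `s_{i,j}` of the shift matrix of the pyramid (the indentation of
row `i` relative to row `j`). -/
def sShift {n : ℕ} (p o : Fin n → ℕ) (i j : Fin n) : ℤ :=
  max ((o j : ℤ) - (o i : ℤ)) (((o j : ℤ) + (p j : ℤ)) - ((o i : ℤ) + (p i : ℤ)))

lemma cPyr_apply (k : Type*) [Field k] {n : ℕ} (p o : Fin n → ℕ) (i j : Fin n) (r : ℕ)
    (a b : PyrBox n p) :
    cPyr k p o i j r a b =
      if a.1 = i ∧ b.1 = j ∧ pyrCol o b + 1 = pyrCol o a + r then 1 else 0 := by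
  classical
  unfold cPyr
  simp only [Matrix.sum_apply]
  have key : ∀ h m : PyrBox n p,
      (if h.1 = i ∧ m.1 = j ∧ pyrCol o m + 1 = pyrCol o h + r
          then Matrix.single h m (1:k) else 0) a b
        = if h = a then (if m = b then
            (if a.1 = i ∧ b.1 = j ∧ pyrCol o b + 1 = pyrCol o a + r then (1:k) else 0)
            else 0) else 0 := by
    intro h m
    rcases eq_or_ne h a with rfl | hha
    · rcases eq_or_ne m b with rfl | hmb
      · simp only [if_pos rfl]
        split_ifs <;> simp [Matrix.single, Matrix.of_apply]
      · simp only [if_pos rfl, if_neg hmb]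
        split_ifs with hc
        · simp only [Matrix.single, Matrix.of_apply]
          rw [if_neg (by tauto)]
        · rfl
    · simp only [if_neg hha]
      split_ifs with hc
      · simp only [Matrix.single, Matrix.of_apply]
        rw [if_neg (by tauto)]
      · rfl
  simp only [key]
  simp

lemma sShift_nonneg {n : ℕ} (p o : Fin n → ℕ)
    (hnest : ∀ i j : Fin n, p i ≤ p j → o j ≤ o i ∧ o i + p i ≤ o j + p j)
    (i j : Fin n) : 0 ≤ sShift p o i j := by
  rw [sShift, le_max_iff]
  rcases le_total (p i) (p j) with h | h
  · obtain ⟨h1, h2⟩ := hnest i j h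
    right; omega
  · obtain ⟨h1, h2⟩ := hnest j i h
    left; omega

lemma cPyr_mul_apply (k : Type*) [Field k] {n : ℕ} (p o : Fin n → ℕ)
    (i j i' j' : Fin n) (r s : ℕ)
    (hr : sShift p o i j < (r : ℤ)) (hs : sShift p o i' j' < (s : ℤ))
    (a b : PyrBox n p) :
    (cPyr k p o i j r * cPyr k p o i' j' s) a b =
      if a.1 = i ∧ b.1 = j' ∧ j = i' ∧ pyrCol o b + 2 = pyrCol o a + (r + s)
        then 1 else 0 := by
  classical
  rw [Matrix.mul_apply]
  simp only [cPyr_apply]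
  have step : ∀ c : PyrBox n p,
      (if a.1 = i ∧ c.1 = j ∧ pyrCol o c + 1 = pyrCol o a + r then (1:k) else 0) *
        (if c.1 = i' ∧ b.1 = j' ∧ pyrCol o b + 1 = pyrCol o c + s then (1:k) else 0)
      = if (a.1 = i ∧ c.1 = j ∧ pyrCol o c + 1 = pyrCol o a + r) ∧
          (c.1 = i' ∧ b.1 = j' ∧ pyrCol o b + 1 = pyrCol o c + s) then (1:k) else 0 := by
    intro c; rw [ite_zero_mul_ite_zero, one_mul]
  simp only [step]
  rw [sShift, max_lt_iff] at hr hs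
  by_cases hT : a.1 = i ∧ b.1 = j' ∧ j = i' ∧ pyrCol o b + 2 = pyrCol o a + (r + s)
  · obtain ⟨hai, hbj', hji', harith⟩ := hT
    rw [if_pos ⟨hai, hbj', hji', harith⟩]
    have hpa : p a.1 = p i := congrArg p hai
    have hoa : o a.1 = o i := congrArg o hai
    have hpb : p b.1 = p j' := congrArg p hbj'
    have hob : o b.1 = o j' := congrArg o hbj'
    have hoi' : o i' = o j := congrArg o hji'.symm
    have hpi' : p i' = p j := congrArg p hji'.symm
    have ha2 : (a.2 : ℕ) < p a.1 := a.2.isLt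
    have hb2 : (b.2 : ℕ) < p b.1 := b.2.isLt
    have hca : pyrCol o a = o a.1 + a.2 := rfl
    have hcb : pyrCol o b = o b.1 + b.2 := rfl
    have hr1 := hr.1
    have hs2 := hs.2
    rw [hoi', hpi'] at hs2
    have hv : pyrCol o a + r - 1 - o j < p j := by omega
    set v : ℕ := pyrCol o a + r - 1 - o j with hvdef
    have hcol : o j + v + 1 = pyrCol o a + r := by omega
    rw [Finset.sum_eq_single (⟨j, ⟨v, hv⟩⟩ : PyrBox n p)]
    · rw [if_pos]
      refine ⟨⟨hai, rfl, ?_⟩, hji' ▸ rfl, hbj', ?_⟩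
      · show o j + v + 1 = pyrCol o a + r; exact hcol
      · show pyrCol o b + 1 = o j + v + s; omega
    · rintro ⟨c1, c2⟩ _ hc
      rw [if_neg]
      rintro ⟨⟨-, hcj, hcc⟩, -⟩
      apply hc
      simp only at hcj
      subst hcj
      have : pyrCol o ⟨c1, c2⟩ = o c1 + c2 := rfl
      have hc2v : (c2 : ℕ) = v := by omega
      congr 1
      exact Fin.ext hc2v
    · intro h; exact absurd (Finset.mem_univ _) h
  · rw [if_neg hT]
    apply Finset.sum_eq_zero
    intro c _
    rw [if_neg]
    rintro ⟨⟨h1, h2, h3⟩, h4, h5, h6⟩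
    exact hT ⟨h1, h5, h2 ▸ h4, by omega⟩

/-- the bracket relation
`[c_{i,j}^{(r)}, c_{i',j'}^{(s)}] = δ_{j,i'} c_{i,j'}^{(r+s-1)} - δ_{i,j'} c_{i',j}^{(r+s-1)}`. -/
theorem cPyr_bracket {k : Type*} [Field k] {n : ℕ} (p o : Fin n → ℕ)
    (hnest : ∀ i j : Fin n, p i ≤ p j → o j ≤ o i ∧ o i + p i ≤ o j + p j)
    (i j i' j' : Fin n) (r s : ℕ)
    (hr : sShift p o i j < (r : ℤ)) (hs : sShift p o i' j' < (s : ℤ)) :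
    ⁅cPyr k p o i j r, cPyr k p o i' j' s⁆ =
      (if j = i' then cPyr k p o i j' (r + s - 1) else 0)
        - (if i = j' then cPyr k p o i' j (r + s - 1) else 0) := by
  have h1 : 1 ≤ r := by have := sShift_nonneg p o hnest i j; omega
  have h1s : 1 ≤ s := by have := sShift_nonneg p o hnest i' j'; omega
  ext a b
  rw [Ring.lie_def, Matrix.sub_apply, Matrix.sub_apply,
    cPyr_mul_apply k p o i j i' j' r s hr hs,
    cPyr_mul_apply k p o i' j' i j s r hs hr]
  have e1 : ((if j = i' then cPyr k p o i j' (r + s - 1) else 0) : Matrix _ _ k) a b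
      = if j = i' then cPyr k p o i j' (r + s - 1) a b else 0 := by
    split_ifs <;> rfl
  have e2 : ((if i = j' then cPyr k p o i' j (r + s - 1) else 0) : Matrix _ _ k) a b
      = if i = j' then cPyr k p o i' j (r + s - 1) a b else 0 := by
    split_ifs <;> rfl
  rw [e1, e2, cPyr_apply, cPyr_apply]
  congr 1
  · rcases eq_or_ne j i' with rfl | h
    · rw [if_pos rfl]
      refine if_congr ⟨?_, ?_⟩ rfl rfl
      · rintro ⟨x, y, -, w⟩; exact ⟨x, y, by omega⟩
      · rintro ⟨x, y, w⟩; exact ⟨x, y, rfl, by omega⟩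
    · rw [if_neg h, if_neg (by tauto)]
  · rcases eq_or_ne i j' with rfl | h
    · rw [if_pos rfl]
      refine if_congr ⟨?_, ?_⟩ rfl rfl
      · rintro ⟨x, y, -, w⟩; exact ⟨x, y, by omega⟩
      · rintro ⟨x, y, w⟩; exact ⟨x, y, rfl, by omega⟩
    · rw [if_neg h, if_neg (by tauto)]
end

section
/- With the pyramid setup, each element c_{i,j}^{(r)} (for s_{i,j} < r ≤ s_{i,j} + p_{min(i,j)}) commutes with the nilpotent element e = Σ_{row(i)=row(j), col(i)=col(j)-1} e_{i,j}, i.e. [c_{i,j}^{(r)}, e] = 0. -/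
/-- The nilpotent element `e` determined by the pyramid. -/
def ePyr (k : Type*) [Field k] {n : ℕ} (p o : Fin n → ℕ) :
    Matrix (PyrBox n p) (PyrBox n p) k :=
  ∑ a : PyrBox n p, ∑ b : PyrBox n p,
    if a.1 = b.1 ∧ pyrCol o a + 1 = pyrCol o b then Matrix.single a b 1 else 0

lemma PyrBox.ext' {n : ℕ} {p : Fin n → ℕ} {a b : PyrBox n p}
    (h1 : a.1 = b.1) (h2 : (a.2 : ℕ) = (b.2 : ℕ)) : a = b := by
  obtain ⟨a1, a2⟩ := a; obtain ⟨b1, b2⟩ := b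
  simp only at h1; subst h1
  simp_all [Fin.ext_iff]

lemma double_sum_entry {k : Type*} [Field k] {α : Type*} [Fintype α] [DecidableEq α]
    (P : α → α → Prop) [∀ a b, Decidable (P a b)] (x y : α) :
    (∑ a : α, ∑ b : α, if P a b then Matrix.single a b (1:k) else 0) x y
      = if P x y then 1 else 0 := by
  simp only [Matrix.sum_apply, apply_ite (fun M : Matrix α α k => M x y), Matrix.zero_apply,
    Matrix.single, Matrix.of_apply]
  rw [Finset.sum_eq_single x]
  · rw [Finset.sum_eq_single y]
    · simp
    · intro b _ hb; split_ifs with h1 h2 <;> simp_all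
    · simp
  · intro a _ ha
    apply Finset.sum_eq_zero; intro b _; split_ifs with h1 h2 <;> simp_all
  · simp

lemma ite_one_mul_ite_one {k : Type*} [Field k] (P Q : Prop) [Decidable P] [Decidable Q] :
    (if P then (1:k) else 0) * (if Q then (1:k) else 0) = if P ∧ Q then 1 else 0 := by
  split_ifs <;> simp_all

/-- each `c_{i,j}^{(r)}` with `s_{i,j} < r ≤ s_{i,j} + p_{min(i,j)}`
commutes with the nilpotent element `e` of the pyramid. -/
theorem cPyr_commutes_with_e {k : Type*} [Field k] {n : ℕ} (p o : Fin n → ℕ)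
    (hnest : ∀ i j : Fin n, p i ≤ p j → o j ≤ o i ∧ o i + p i ≤ o j + p j)
    (i j : Fin n) (r : ℕ)
    (h1 : sShift p o i j < (r : ℤ))
    (h2 : (r : ℤ) ≤ sShift p o i j + (min (p i) (p j) : ℤ)) :
    ⁅cPyr k p o i j r, ePyr k p o⁆ = 0 := by
  rw [Ring.lie_def, sub_eq_zero]
  rw [sShift, max_lt_iff] at h1
  obtain ⟨s1, s2⟩ := h1
  ext x y
  rw [Matrix.mul_apply, Matrix.mul_apply]
  have hc : ∀ a b : PyrBox n p, cPyr k p o i j r a b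
      = if a.1 = i ∧ b.1 = j ∧ pyrCol o b + 1 = pyrCol o a + r then 1 else 0 := by
    intro a b; exact double_sum_entry _ a b
  have he : ∀ a b : PyrBox n p, ePyr k p o a b
      = if a.1 = b.1 ∧ pyrCol o a + 1 = pyrCol o b then 1 else 0 := by
    intro a b; exact double_sum_entry _ a b
  simp only [hc, he, ite_one_mul_ite_one]
  set T : Prop := x.1 = i ∧ y.1 = j ∧ pyrCol o y = pyrCol o x + r with hT
  have key1 : (∑ m : PyrBox n p,
      if (x.1 = i ∧ m.1 = j ∧ pyrCol o m + 1 = pyrCol o x + r) ∧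
         (m.1 = y.1 ∧ pyrCol o m + 1 = pyrCol o y) then (1:k) else 0)
      = if T then 1 else 0 := by
    by_cases hTc : T
    · obtain ⟨hx, hy, hcol⟩ := hTc
      have hox : o x.1 = o i := congrArg o hx
      have hoy : o y.1 = o j := congrArg o hy
      have hxe : pyrCol o x = o x.1 + x.2.val := rfl
      have hye : pyrCol o y = o y.1 + y.2.val := rfl
      have hy2 : 1 ≤ y.2.val := by omega
      set m0 : PyrBox n p := ⟨y.1, ⟨y.2.val - 1, lt_of_le_of_lt (Nat.sub_le _ _) y.2.isLt⟩⟩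
        with hm0
      have hom0 : o m0.1 = o y.1 := rfl
      have hm0v : (m0.2 : ℕ) = y.2.val - 1 := rfl
      have hm0e : pyrCol o m0 = o m0.1 + m0.2.val := rfl
      have hcolm0 : pyrCol o m0 + 1 = pyrCol o y := by omega
      rw [Finset.sum_eq_single m0]
      · rw [if_pos ⟨⟨hx, show m0.1 = j from hy, by omega⟩, rfl, hcolm0⟩,
          if_pos ⟨hx, hy, hcol⟩]
      · intro m _ hm
        rw [if_neg]
        rintro ⟨⟨-, hmj, -⟩, hmy, hmy2⟩
        apply hm
        have h1' : m.1 = m0.1 := hmy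
        have hom : o m.1 = o m0.1 := congrArg o h1'
        have hme : pyrCol o m = o m.1 + m.2.val := rfl
        exact PyrBox.ext' h1' (by omega)
      · intro hmem; exact absurd (Finset.mem_univ m0) hmem
    · rw [if_neg hTc]
      apply Finset.sum_eq_zero
      intro m _
      rw [if_neg]
      rintro ⟨⟨hx, hmj, hmc⟩, hmy, hmy2⟩
      exact hTc ⟨hx, hmy ▸ hmj, by omega⟩
  have key2 : (∑ h : PyrBox n p,
      if (x.1 = h.1 ∧ pyrCol o x + 1 = pyrCol o h) ∧
         (h.1 = i ∧ y.1 = j ∧ pyrCol o y + 1 = pyrCol o h + r) then (1:k) else 0)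
      = if T then 1 else 0 := by
    by_cases hTc : T
    · obtain ⟨hx, hy, hcol⟩ := hTc
      have hox : o x.1 = o i := congrArg o hx
      have hoy : o y.1 = o j := congrArg o hy
      have hpx : p x.1 = p i := congrArg p hx
      have hxe : pyrCol o x = o x.1 + x.2.val := rfl
      have hye : pyrCol o y = o y.1 + y.2.val := rfl
      have hpy : p y.1 = p j := congrArg p hy
      have hyub : y.2.val < p j := by
        have := y.2.isLt; omega
      have hx2 : x.2.val + 1 < p x.1 := by omega
      set h0 : PyrBox n p := ⟨x.1, ⟨x.2.val + 1, hx2⟩⟩ with hh0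
      have hoh0 : o h0.1 = o x.1 := rfl
      have hh0v : (h0.2 : ℕ) = x.2.val + 1 := rfl
      have hh0e : pyrCol o h0 = o h0.1 + h0.2.val := rfl
      have hcolh0 : pyrCol o h0 = pyrCol o x + 1 := by omega
      rw [Finset.sum_eq_single h0]
      · rw [if_pos ⟨⟨rfl, hcolh0.symm⟩, show h0.1 = i from hx, hy, by omega⟩,
          if_pos ⟨hx, hy, hcol⟩]
      · intro h _ hh
        rw [if_neg]
        rintro ⟨⟨hxh, hxc⟩, -, -, -⟩
        apply hh
        have h1' : h.1 = h0.1 := hxh.symm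
        have hom : o h.1 = o h0.1 := congrArg o h1'
        have hme : pyrCol o h = o h.1 + h.2.val := rfl
        exact PyrBox.ext' h1' (by omega)
      · intro hmem; exact absurd (Finset.mem_univ h0) hmem
    · rw [if_neg hTc]
      apply Finset.sum_eq_zero
      intro h _
      rw [if_neg]
      rintro ⟨⟨hxh, hxc⟩, hhi, hyj, hyc⟩
      exact hTc ⟨hxh ▸ hhi, hyj, by omega⟩
  rw [key1, key2]
end

section
/- Define ρ = -Σ_{i=1}^N i·ε_i, ρ̄ = -Σ_{i=1}^N ((q_1+…+q_{col(i)-1}) + row(i) - (n - q_{col(i)}))·ε_i, and γ = Σ_{α ∈ Φ(-)_+} α, where Φ(-)_+ = {ε_i - ε_j : col(i) > col(j), row(i) < row(j)}. Then ρ = ρ̄ + γ as elements of the weight lattice ℤ^N. -/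
/-- the combinatorial identity `ρ = ρ̄ + γ` in `ℤ^N`, where for a
pyramid with boxes numbered `1,…,N` along rows from top to bottom:
`ρ_i = -i`, `ρ̄_i = -((q_1 + … + q_{col(i)-1}) + row(i) - (n - q_{col(i)}))`,
and `γ = Σ_{α ∈ Φ(-)_+} α` with
`Φ(-)_+ = {ε_i - ε_j : col(i) > col(j), row(i) < row(j)}`. -/
theorem rho_eq_rhoBar_add_gamma {N n : ℕ} (row col : Fin N → ℕ)
    (hrow : ∀ i, 1 ≤ row i ∧ row i ≤ n)
    (hcol : ∀ i, 1 ≤ col i)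
    -- boxes are numbered along rows, from the top row downwards
    (horder : ∀ i j : Fin N, i < j ↔
      (row i < row j ∨ (row i = row j ∧ col i < col j)))
    -- a box is determined by its row and column
    (hinj : ∀ i j, row i = row j → col i = col j → i = j)
    -- each row occupies consecutive columns
    (hrowint : ∀ i j c, row i = row j → col i ≤ c → c ≤ col j →
      ∃ m, row m = row i ∧ col m = c)
    -- `q c` is the number of boxes in column `c`
    (q : ℕ → ℕ)
    (hq : ∀ c, q c = (Finset.univ.filter fun i => col i = c).card)
    -- each column occupies the bottom `q c` rows consecutively
    (hcolbot : ∀ (i : Fin N) (r : ℕ), n - q (col i) < r → r ≤ n →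
      ∃ j, col j = col i ∧ row j = r) :
    ∀ i : Fin N,
      -(((i : ℕ) : ℤ) + 1) =
        -((∑ c ∈ Finset.Ico 1 (col i), (q c : ℤ)) + (row i : ℤ)
            - ((n : ℤ) - (q (col i) : ℤ)))
          + (((Finset.univ.filter fun j : Fin N =>
                col j < col i ∧ row i < row j).card : ℤ)
            - ((Finset.univ.filter fun j : Fin N =>
                col i < col j ∧ row j < row i).card : ℤ)) := by
  classical
  -- key facts: each column c (which contains a box) has q c ≤ n boxes,
  -- occupying exactly the rows n - q c + 1, …, n
  have key : ∀ j : Fin N, q (col j) ≤ n ∧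
      (Finset.univ.filter fun m : Fin N => col m = col j).image row
        = Finset.Ico (n - q (col j) + 1) (n + 1) := by
    intro j
    set C := Finset.univ.filter fun m : Fin N => col m = col j with hC
    have hinjC : Set.InjOn row C := by
      intro a ha b hb hab
      simp only [hC, Finset.coe_filter, Set.mem_setOf_eq, Finset.mem_univ, true_and] at ha hb
      exact hinj a b hab (ha.trans hb.symm)
    have himg : (C.image row).card = q (col j) := by
      rw [Finset.card_image_of_injOn hinjC, hq (col j)]
    have hsub1 : C.image row ⊆ Finset.Icc 1 n := by
      intro t ht
      obtain ⟨m, _, rfl⟩ := Finset.mem_image.mp ht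
      exact Finset.mem_Icc.mpr ⟨(hrow m).1, (hrow m).2⟩
    have hqn : q (col j) ≤ n := by
      have h := Finset.card_le_card hsub1
      rw [himg, Nat.card_Icc] at h
      omega
    have hsub2 : Finset.Ico (n - q (col j) + 1) (n + 1) ⊆ C.image row := by
      intro t ht
      rw [Finset.mem_Ico] at ht
      obtain ⟨m, hm1, hm2⟩ := hcolbot j t (by omega) (by omega)
      exact Finset.mem_image.mpr ⟨m, by simp [hC, hm1], hm2⟩
    refine ⟨hqn, Finset.eq_of_subset_of_card_le ?_ ?_ |>.symm⟩
    · exact hsub2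
    · rw [himg, Nat.card_Ico]; omega
  have rowbound : ∀ j : Fin N, n - q (col j) < row j := by
    intro j
    have hmem : row j ∈ (Finset.univ.filter fun m : Fin N => col m = col j).image row :=
      Finset.mem_image.mpr ⟨j, by simp, rfl⟩
    rw [(key j).2, Finset.mem_Ico] at hmem
    omega
  intro i
  set c := col i with hc
  set r := row i with hr
  set A := Finset.univ.filter (fun j : Fin N => col j < c ∧ r < row j) with hA
  set B := Finset.univ.filter (fun j : Fin N => c < col j ∧ row j < r) with hB
  set L := Finset.univ.filter (fun j : Fin N => j < i) with hL
  set S1 := Finset.univ.filter (fun j : Fin N => col j < c) with hS1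
  set S2 := Finset.univ.filter (fun j : Fin N => col j = c ∧ row j < r) with hS2
  have hunion : L ∪ A = S1 ∪ (S2 ∪ B) := by
    ext j
    simp only [hL, hA, hS1, hS2, hB, Finset.mem_union, Finset.mem_filter,
      Finset.mem_univ, true_and]
    constructor
    · rintro (hj | ⟨h1, _⟩)
      · rcases (horder j i).mp hj with h | ⟨h1, h2⟩
        · rcases lt_trichotomy (col j) c with h' | h' | h'
          · exact Or.inl h'
          · exact Or.inr (Or.inl ⟨h', h⟩)
          · exact Or.inr (Or.inr ⟨h', h⟩)
        · exact Or.inl h2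
      · exact Or.inl h1
    · rintro (h | ⟨h1, h2⟩ | ⟨h1, h2⟩)
      · rcases lt_trichotomy (row j) r with h' | h' | h'
        · exact Or.inl ((horder j i).mpr (Or.inl h'))
        · exact Or.inl ((horder j i).mpr (Or.inr ⟨h', h⟩))
        · exact Or.inr ⟨h, h'⟩
      · exact Or.inl ((horder j i).mpr (Or.inl h2))
      · exact Or.inl ((horder j i).mpr (Or.inl h2))
  have hdLA : Disjoint L A := by
    rw [Finset.disjoint_left]
    intro j hj hj'
    simp only [hL, Finset.mem_filter, Finset.mem_univ, true_and] at hj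
    simp only [hA, Finset.mem_filter, Finset.mem_univ, true_and] at hj'
    rcases (horder j i).mp hj with h | ⟨h, _⟩ <;> omega
  have hdS2B : Disjoint S2 B := by
    rw [Finset.disjoint_left]
    intro j hj hj'
    simp only [hS2, Finset.mem_filter, Finset.mem_univ, true_and] at hj
    simp only [hB, Finset.mem_filter, Finset.mem_univ, true_and] at hj'
    omega
  have hdS1 : Disjoint S1 (S2 ∪ B) := by
    rw [Finset.disjoint_left]
    intro j hj hj'
    simp only [hS1, Finset.mem_filter, Finset.mem_univ, true_and] at hj
    simp only [hS2, hB, Finset.mem_union, Finset.mem_filter, Finset.mem_univ, true_and] at hj'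
    omega
  have hcards : L.card + A.card = S1.card + (S2.card + B.card) := by
    rw [← Finset.card_union_of_disjoint hdLA, hunion,
      Finset.card_union_of_disjoint hdS1, Finset.card_union_of_disjoint hdS2B]
  have hLcard : L.card = (i : ℕ) := by
    have : L = Finset.Iio i := by
      ext j; simp [hL, Finset.mem_Iio]
    rw [this, Fin.card_Iio]
  have hS1card : S1.card = ∑ c' ∈ Finset.Ico 1 c, q c' := by
    have hbu : S1 = (Finset.Ico 1 c).biUnion
        (fun c' => Finset.univ.filter fun j : Fin N => col j = c') := by
      ext j
      simp only [hS1, Finset.mem_biUnion, Finset.mem_filter, Finset.mem_univ, true_and,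
        Finset.mem_Ico]
      constructor
      · intro h; exact ⟨col j, ⟨hcol j, h⟩, rfl⟩
      · rintro ⟨c', ⟨_, h2⟩, rfl⟩; exact h2
    rw [hbu, Finset.card_biUnion]
    · exact Finset.sum_congr rfl fun c' _ => (hq c').symm
    · intro a _ b _ hab
      rw [Function.onFun, Finset.disjoint_left]
      intro j hj hj'
      simp only [Finset.mem_filter] at hj hj'
      exact hab (hj.2.symm.trans hj'.2)
  have hS2card : S2.card = r - (n - q c + 1) := by
    rw [← Nat.card_Ico (n - q c + 1) r]
    apply Finset.card_bij (fun j _ => row j)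
    · intro j hj
      simp only [hS2, Finset.mem_filter, Finset.mem_univ, true_and] at hj
      have hb := rowbound j
      rw [hj.1] at hb
      exact Finset.mem_Ico.mpr ⟨by omega, hj.2⟩
    · intro a ha b hb hab
      simp only [hS2, Finset.mem_filter, Finset.mem_univ, true_and] at ha hb
      exact hinj a b hab (ha.1.trans hb.1.symm)
    · intro t ht
      rw [Finset.mem_Ico] at ht
      have hrn : r ≤ n := (hrow i).2
      obtain ⟨j, hj1, hj2⟩ := hcolbot i t (by rw [← hc]; omega) (by omega)
      refine ⟨j, ?_, hj2⟩
      rw [hS2, Finset.mem_filter]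
      exact ⟨Finset.mem_univ j, hj1, by omega⟩
  -- now finish with integer arithmetic
  have hqn : q c ≤ n := (key i).1
  have hrb : n - q c < r := rowbound i
  have hrn : r ≤ n := (hrow i).2
  rw [hLcard, hS1card, hS2card] at hcards
  rw [show (∑ c' ∈ Finset.Ico 1 c, (q c' : ℤ))
      = ((∑ c' ∈ Finset.Ico 1 c, q c' : ℕ) : ℤ) from by push_cast; rfl]
  omega
end
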